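/- Let $p$ be a prime, $r \ge 1$, and suppose $\gamma \in \mathrm{SL}_d(\mathbb{Z}/p^r\mathbb{Z})$ has the property that all its diagonal entries are units. If moreover $\gamma \equiv I \pmod{p^m}$ for some $m \ge 1$, then $\gamma$ can be written as $N \cdot H \cdot U$ where $N$ is lower unitriangular with strictly lower entries divisible by $p^m$, $H$ is diagonal with diagonal entries $\equiv 1 \pmod{p^m}$, and $U$ is upper unitriangular with strictly upper entries divisible by $p^m$. -/

import Mathlib

open Matrix

private lemma mul_diag_apply {R : Type*} [CommRing R] {n : ℕ}
    (H U : Matrix (Fin n) (Fin n) R) (hH : ∀ i j, i ≠ j → H i j = 0) (k j : Fin n) :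
    (H * U) k j = H k k * U k j := by
  rw [Matrix.mul_apply]
  refine Finset.sum_eq_single k (fun l _ hl => by rw [hH k l (Ne.symm hl), zero_mul]) (by simp)

private lemma ldu_aux {R : Type*} [CommRing R] (t : R) (ht : ∀ x : R, IsUnit (1 + t * x)) :
    ∀ (n : ℕ) (A : Matrix (Fin n) (Fin n) R),
      (∀ i j, t ∣ A i j - (1 : Matrix (Fin n) (Fin n) R) i j) →
    ∃ N H U : Matrix (Fin n) (Fin n) R,
      (∀ i, N i i = 1) ∧ (∀ i j, i < j → N i j = 0) ∧ (∀ i j, j < i → t ∣ N i j) ∧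
      (∀ i j, i ≠ j → H i j = 0) ∧ (∀ i, t ∣ H i i - 1) ∧
      (∀ i, U i i = 1) ∧ (∀ i j, j < i → U i j = 0) ∧ (∀ i j, i < j → t ∣ U i j) ∧
      A = N * H * U := by
  intro n
  induction n with
  | zero =>
    intro A _
    refine ⟨1, 1, 1, fun i => i.elim0, fun i => i.elim0, fun i => i.elim0, fun i => i.elim0,
      fun i => i.elim0, fun i => i.elim0, fun i => i.elim0, fun i => i.elim0, ?_⟩
    ext i
    exact i.elim0
  | succ n ih =>
    intro A hA
    -- the pivot is a unit
    have hb0 : t ∣ A 0 0 - 1 := by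
      have := hA 0 0
      rwa [Matrix.one_apply_eq] at this
    obtain ⟨b, hb⟩ := hb0
    have hu : IsUnit (A 0 0) := by
      have : A 0 0 = 1 + t * b := by linear_combination hb
      rw [this]; exact ht b
    set c : R := ↑hu.unit⁻¹ with hc
    have hac : A 0 0 * c = 1 := hu.mul_val_inv
    -- divisibility of first row/column off-diagonal entries
    have hcol : ∀ i : Fin n, t ∣ A i.succ 0 := by
      intro i
      have := hA i.succ 0
      rwa [Matrix.one_apply_ne (Fin.succ_ne_zero i), sub_zero] at this
    have hrow : ∀ j : Fin n, t ∣ A 0 j.succ := by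
      intro j
      have := hA 0 j.succ
      rwa [Matrix.one_apply_ne (Fin.succ_ne_zero j).symm, sub_zero] at this
    -- Schur complement
    set S : Matrix (Fin n) (Fin n) R :=
      Matrix.of (fun i j => A i.succ j.succ - A i.succ 0 * c * A 0 j.succ) with hS
    have hSd : ∀ i j, t ∣ S i j - (1 : Matrix (Fin n) (Fin n) R) i j := by
      intro i j
      have h1 : S i j - (1 : Matrix (Fin n) (Fin n) R) i j =
          (A i.succ j.succ - (1 : Matrix (Fin (n+1)) (Fin (n+1)) R) i.succ j.succ)
          - A i.succ 0 * c * A 0 j.succ := by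
        simp only [hS, Matrix.of_apply, Matrix.one_apply, Fin.succ_inj]
        ring
      rw [h1]
      exact dvd_sub (hA i.succ j.succ) (((hcol i).mul_right _).mul_right _)
    obtain ⟨N', H', U', hN'd, hN'u, hN'l, hH'o, hH'd, hU'd, hU'l, hU'u, hE'⟩ := ih S hSd
    set N : Matrix (Fin (n+1)) (Fin (n+1)) R :=
      Matrix.of (Fin.cons (Fin.cons 1 0) (fun i => Fin.cons (A i.succ 0 * c) (N' i))) with hN
    set H : Matrix (Fin (n+1)) (Fin (n+1)) R :=
      Matrix.of (Fin.cons (Fin.cons (A 0 0) 0) (fun i => Fin.cons 0 (H' i))) with hH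
    set U : Matrix (Fin (n+1)) (Fin (n+1)) R :=
      Matrix.of (Fin.cons (Fin.cons 1 (fun j => c * A 0 j.succ))
        (fun i => Fin.cons 0 (U' i))) with hU
    have hHo : ∀ i j : Fin (n+1), i ≠ j → H i j = 0 := by
      intro i j hij
      induction i using Fin.cases with
      | zero =>
        induction j using Fin.cases with
        | zero => exact absurd rfl hij
        | succ j => simp [hH]
      | succ i =>
        induction j using Fin.cases with
        | zero => simp [hH]
        | succ j => simpa [hH] using hH'o i j (by simpa [Fin.succ_inj] using hij)
    refine ⟨N, H, U, ?_, ?_, ?_, hHo, ?_, ?_, ?_, ?_, ?_⟩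
    · intro i
      induction i using Fin.cases with
      | zero => simp [hN]
      | succ i => simpa [hN] using hN'd i
    · intro i j hij
      induction i using Fin.cases with
      | zero =>
        induction j using Fin.cases with
        | zero => exact absurd hij (lt_irrefl _)
        | succ j => simp [hN]
      | succ i =>
        induction j using Fin.cases with
        | zero => exact absurd hij (by simp [Fin.lt_iff_val_lt_val])
        | succ j => simpa [hN] using hN'u i j (by simpa [Fin.succ_lt_succ_iff] using hij)
    · intro i j hij
      induction i using Fin.cases with
      | zero => exact absurd hij (by simp [Fin.lt_iff_val_lt_val])
      | succ i =>
        induction j using Fin.cases with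
        | zero => simpa [hN] using (hcol i).mul_right c
        | succ j => simpa [hN] using hN'l i j (by simpa [Fin.succ_lt_succ_iff] using hij)
    · intro i
      induction i using Fin.cases with
      | zero => simpa [hH] using ⟨b, hb⟩
      | succ i => simpa [hH] using hH'd i
    · intro i
      induction i using Fin.cases with
      | zero => simp [hU]
      | succ i => simpa [hU] using hU'd i
    · intro i j hij
      induction i using Fin.cases with
      | zero => exact absurd hij (by simp [Fin.lt_iff_val_lt_val])
      | succ i =>
        induction j using Fin.cases with
        | zero => simp [hU]
        | succ j => simpa [hU] using hU'l i j (by simpa [Fin.succ_lt_succ_iff] using hij)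
    · intro i j hij
      induction i using Fin.cases with
      | zero =>
        induction j using Fin.cases with
        | zero => exact absurd hij (lt_irrefl _)
        | succ j => simpa [hU] using (hrow j).mul_left c
      | succ i =>
        induction j using Fin.cases with
        | zero => exact absurd hij (by simp [Fin.lt_iff_val_lt_val])
        | succ j => simpa [hU] using hU'u i j (by simpa [Fin.succ_lt_succ_iff] using hij)
    · -- the product identity
      have key : ∀ i j, (N * H * U) i j =
          N i 0 * (H 0 0 * U 0 j) +
          ∑ k : Fin n, N i k.succ * (H k.succ k.succ * U k.succ j) := by
        intro i j
        rw [Matrix.mul_assoc, Matrix.mul_apply, Fin.sum_univ_succ]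
        simp_rw [mul_diag_apply H U hHo]
      have hE'entry : ∀ i j, S i j =
          ∑ k : Fin n, N' i k * (H' k k * U' k j) := by
        intro i j
        conv_lhs => rw [hE']
        rw [Matrix.mul_assoc, Matrix.mul_apply]
        simp_rw [mul_diag_apply H' U' hH'o]
      ext i j
      rw [key]
      induction i using Fin.cases with
      | zero =>
        induction j using Fin.cases with
        | zero => simp [hN, hH, hU]
        | succ j =>
          simp only [hN, hH, hU, Matrix.of_apply, Fin.cons_zero, Fin.cons_succ,
            Pi.zero_apply, zero_mul, Finset.sum_const_zero, add_zero, one_mul]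
          linear_combination (-(A 0 j.succ)) * hac
      | succ i =>
        induction j using Fin.cases with
        | zero =>
          simp only [hN, hH, hU, Matrix.of_apply, Fin.cons_zero, Fin.cons_succ,
            Pi.zero_apply, mul_zero, zero_mul, Finset.sum_const_zero, add_zero, mul_one]
          linear_combination (-(A i.succ 0)) * hac
        | succ j =>
          simp only [hN, hH, hU, Matrix.of_apply, Fin.cons_zero, Fin.cons_succ]
          rw [← hE'entry i j]
          simp only [hS, Matrix.of_apply]
          linear_combination (-(A i.succ 0 * c * A 0 j.succ)) * hac

/-- LDU decomposition of elements of the principal congruence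
subgroup of level `p^m` in `SL_d(ℤ/p^rℤ)`. -/
theorem congruence_LDU (p r m d : ℕ) (hp : p.Prime) (hr : 1 ≤ r) (hm : 1 ≤ m)
    (γ : Matrix.SpecialLinearGroup (Fin d) (ZMod (p ^ r)))
    (hdiag : ∀ i, IsUnit ((γ : Matrix (Fin d) (Fin d) (ZMod (p ^ r))) i i))
    (hγ : ∀ i j, (p : ZMod (p ^ r)) ^ m ∣
      ((γ : Matrix (Fin d) (Fin d) (ZMod (p ^ r))) i j
        - (1 : Matrix (Fin d) (Fin d) (ZMod (p ^ r))) i j)) :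
    ∃ N H U : Matrix (Fin d) (Fin d) (ZMod (p ^ r)),
      (∀ i, N i i = 1) ∧ (∀ i j : Fin d, i < j → N i j = 0) ∧
      (∀ i j : Fin d, j < i → (p : ZMod (p ^ r)) ^ m ∣ N i j) ∧
      (∀ i j : Fin d, i ≠ j → H i j = 0) ∧
      (∀ i, (p : ZMod (p ^ r)) ^ m ∣ (H i i - 1)) ∧
      (∀ i, U i i = 1) ∧ (∀ i j : Fin d, j < i → U i j = 0) ∧
      (∀ i j : Fin d, i < j → (p : ZMod (p ^ r)) ^ m ∣ U i j) ∧
      (γ : Matrix (Fin d) (Fin d) (ZMod (p ^ r))) = N * H * U := by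
  have hpnil : IsNilpotent ((p : ZMod (p ^ r))) := by
    refine ⟨r, ?_⟩
    rw [← Nat.cast_pow, ZMod.natCast_self]
  have ht : ∀ x : ZMod (p ^ r), IsUnit (1 + (p : ZMod (p ^ r)) ^ m * x) := by
    intro x
    refine IsNilpotent.isUnit_one_add ?_
    exact (Commute.all _ x).isNilpotent_mul_right (hpnil.pow_of_pos (by omega))
  obtain ⟨N, H, U, h1, h2, h3, h4, h5, h6, h7, h8, h9⟩ :=
    ldu_aux ((p : ZMod (p ^ r)) ^ m) ht d (γ : Matrix (Fin d) (Fin d) (ZMod (p ^ r))) hγ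
  exact ⟨N, H, U, h1, h2, h3, h4, h5, h6, h7, h8, h9⟩
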